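/- For all real parameters η > 0, φ > 0 and every natural number r, the r-th factorial moment of the PCD equals the r-th raw moment of the mixing Copoun distribution: ∑_{x=0}^∞ x(x−1)⋯(x−r+1)·p(x) = (r! / (η^r(φ+η)))·[η + (φ/6)(r+1)(r+2)(r+3)], where x(x−1)⋯(x−r+1) denotes the falling factorial of length r. -/

import Mathlib

lemma prod_range_cast_descFactorial (x r : ℕ) :
    ∏ i ∈ Finset.range r, ((x : ℝ) - (i : ℝ)) = (x.descFactorial r : ℝ) := by
  induction r with
  | zero => simp
  | succ r ih =>
    rw [Finset.prod_range_succ, ih, Nat.descFactorial_succ]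
    by_cases h : x < r
    · rw [Nat.descFactorial_eq_zero_iff_lt.2 h]; simp
    · push_neg at h
      rw [Nat.cast_mul, Nat.cast_sub h]; ring

lemma aux_hasSum {q : ℝ} (hq : ‖q‖ < 1) (k s : ℕ) (hs : s ≤ k) :
    HasSum (fun x : ℕ => (((x + s).choose k : ℕ) : ℝ) * q ^ x)
      (q ^ (k - s) / (1 - q) ^ (k + 1)) := by
  have base := (hasSum_choose_mul_geometric_of_norm_lt_one (𝕜 := ℝ) k hq).mul_right
    (q ^ (k - s))
  have hinj : Function.Injective (fun n : ℕ => n + (k - s)) := fun a b h => by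
    simpa using h
  have hvan : ∀ x ∉ Set.range (fun n : ℕ => n + (k - s)),
      (((x + s).choose k : ℕ) : ℝ) * q ^ x = 0 := by
    intro x hx
    have hlt : x < k - s := by
      by_contra h
      exact hx ⟨x - (k - s), by simp only []; omega⟩
    rw [Nat.choose_eq_zero_of_lt (by omega)]
    simp
  rw [← hinj.hasSum_iff hvan]
  have hfc : ((fun x : ℕ => (((x + s).choose k : ℕ) : ℝ) * q ^ x) ∘ fun n : ℕ => n + (k - s))
      = fun n : ℕ => (((n + k).choose k : ℕ) : ℝ) * q ^ n * q ^ (k - s) := by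
    funext n
    simp only [Function.comp]
    rw [show n + (k - s) + s = n + k by omega, pow_add]
    ring
  rw [hfc, show q ^ (k - s) / (1 - q) ^ (k + 1) = 1 / (1 - q) ^ (k + 1) * q ^ (k - s) by ring]
  exact base

/-- The r-th factorial moment of the PCD equals the r-th raw moment of the mixing
Copoun distribution. Here the falling factorial `x(x−1)⋯(x−r+1)` is written as
`∏ i ∈ Finset.range r, ((x : ℝ) - i)`. -/
theorem pcd_factorial_moment (η φ : ℝ) (hη : 0 < η) (hφ : 0 < φ) (r : ℕ) :
    ∑' x : ℕ, (∏ i ∈ Finset.range r, ((x : ℝ) - (i : ℝ))) *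
        ((η ^ 2 / ((φ + η) * (1 + η) ^ (x + 4)))
          * ((1 + η) ^ 3
            + (φ * η ^ 2 / 6) * ((x : ℝ) + 1) * ((x : ℝ) + 2) * ((x : ℝ) + 3)))
      = ((Nat.factorial r : ℝ) / (η ^ r * (φ + η)))
          * (η + (φ / 6) * ((r : ℝ) + 1) * ((r : ℝ) + 2) * ((r : ℝ) + 3)) := by
  have h1 : (0:ℝ) < 1 + η := by linarith
  have h1' : (1:ℝ) + η ≠ 0 := ne_of_gt h1
  have hφη : φ + η ≠ 0 := by positivity
  set q : ℝ := (1 + η)⁻¹ with hqdef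
  have hq0 : q ≠ 0 := inv_ne_zero h1'
  have hqlt : ‖q‖ < 1 := by
    rw [Real.norm_eq_abs, abs_of_pos (inv_pos.2 h1)]
    rw [inv_lt_one_iff₀]
    right; linarith
  set A : ℝ := η ^ 2 * (1 + η) ^ 3 / (φ + η) * q ^ 4 * (r.factorial : ℝ) with hA
  set B : ℝ := η ^ 2 / (φ + η) * q ^ 4 * (φ * η ^ 2 / 6) * ((r + 3).factorial : ℝ) with hB
  have key : ∀ x : ℕ, (∏ i ∈ Finset.range r, ((x : ℝ) - (i : ℝ))) *
        ((η ^ 2 / ((φ + η) * (1 + η) ^ (x + 4)))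
          * ((1 + η) ^ 3
            + (φ * η ^ 2 / 6) * ((x : ℝ) + 1) * ((x : ℝ) + 2) * ((x : ℝ) + 3)))
      = A * ((((x + 0).choose r : ℕ) : ℝ) * q ^ x)
        + B * ((((x + 3).choose (r + 3) : ℕ) : ℝ) * q ^ x) := by
    intro x
    have e1 : ∏ i ∈ Finset.range r, ((x : ℝ) - (i : ℝ))
        = (r.factorial : ℝ) * ((x.choose r : ℕ) : ℝ) := by
      rw [prod_range_cast_descFactorial, Nat.descFactorial_eq_factorial_mul_choose]
      push_cast; ring
    have e2 : (∏ i ∈ Finset.range r, ((x : ℝ) - (i : ℝ))) *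
          (((x : ℝ) + 1) * ((x : ℝ) + 2) * ((x : ℝ) + 3))
        = ((r + 3).factorial : ℝ) * (((x + 3).choose (r + 3) : ℕ) : ℝ) := by
      have := prod_range_cast_descFactorial (x + 3) (r + 3)
      rw [show r + 3 = 3 + r by omega, Finset.prod_range_add] at this
      rw [Nat.descFactorial_eq_factorial_mul_choose] at this
      have h3 : ∏ i ∈ Finset.range 3, (((x + 3 : ℕ) : ℝ) - (i : ℝ))
          = ((x : ℝ) + 3) * ((x : ℝ) + 2) * ((x : ℝ) + 1) := by
        simp [Finset.prod_range_succ]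
        ring
      have h4 : ∏ i ∈ Finset.range r, (((x + 3 : ℕ) : ℝ) - ((3 + i : ℕ) : ℝ))
          = ∏ i ∈ Finset.range r, ((x : ℝ) - (i : ℝ)) := by
        apply Finset.prod_congr rfl
        intro i _
        push_cast; ring
      rw [h3, h4] at this
      rw [show (3 : ℕ) + r = r + 3 by omega] at this
      push_cast at this ⊢
      nlinarith [this]
    have hqx : q ^ x = ((1 + η) ^ x)⁻¹ := by rw [hqdef, inv_pow]
    have hq4 : q ^ 4 = ((1 + η) ^ 4)⁻¹ := by rw [hqdef, inv_pow]
    have hpx : ((1:ℝ) + η) ^ x ≠ 0 := pow_ne_zero _ h1'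
    have hp4 : ((1:ℝ) + η) ^ 4 ≠ 0 := pow_ne_zero _ h1'
    have hsplit : η ^ 2 / ((φ + η) * (1 + η) ^ (x + 4)) = η ^ 2 * q ^ 4 / (φ + η) * q ^ x := by
      rw [pow_add, hqx, hq4]
      field_simp
    rw [hsplit, hA, hB, Nat.add_zero]
    linear_combination (η ^ 2 * q ^ 4 / (φ + η) * q ^ x * (1 + η) ^ 3) * e1
      + (η ^ 2 * q ^ 4 / (φ + η) * q ^ x * (φ * η ^ 2 / 6)) * e2
  have S1 := (aux_hasSum hqlt r 0 (Nat.zero_le _)).mul_left A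
  have S2 := (aux_hasSum hqlt (r + 3) 3 (by omega)).mul_left B
  have hS := S1.add S2
  have hSum : HasSum (fun x : ℕ => (∏ i ∈ Finset.range r, ((x : ℝ) - (i : ℝ))) *
        ((η ^ 2 / ((φ + η) * (1 + η) ^ (x + 4)))
          * ((1 + η) ^ 3
            + (φ * η ^ 2 / 6) * ((x : ℝ) + 1) * ((x : ℝ) + 2) * ((x : ℝ) + 3))))
      (A * (q ^ (r - 0) / (1 - q) ^ (r + 1)) + B * (q ^ (r + 3 - 3) / (1 - q) ^ (r + 3 + 1))) := by
    convert hS using 1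
    · rfl
    funext x
    exact key x
  rw [hSum.tsum_eq]
  -- final algebra
  have hmq : 1 - q = η * q := by
    rw [hqdef]; field_simp; ring
  rw [show r - 0 = r by omega, show r + 3 - 3 = r by omega, hmq]
  have hfac : (((r + 3).factorial : ℕ) : ℝ)
      = ((r : ℝ) + 3) * ((r : ℝ) + 2) * ((r : ℝ) + 1) * (r.factorial : ℝ) := by
    rw [show r + 3 = (r + 2) + 1 by omega, Nat.factorial_succ,
      show r + 2 = (r + 1) + 1 by omega, Nat.factorial_succ, Nat.factorial_succ]
    push_cast; ring
  have hηr : η ^ r ≠ 0 := pow_ne_zero _ (ne_of_gt hη)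
  have hη' : η ≠ 0 := ne_of_gt hη
  have hpr : ((1:ℝ) + η) ^ r ≠ 0 := pow_ne_zero _ h1'
  have hp4 : ((1:ℝ) + η) ^ 4 ≠ 0 := pow_ne_zero _ h1'
  have hq4 : q ^ 4 = ((1 + η) ^ 4)⁻¹ := by rw [hqdef, inv_pow]
  have t1 : q ^ r / (η * q) ^ (r + 1) = (1 + η) / (η ^ r * η) := by
    rw [mul_pow, hqdef, inv_pow, inv_pow, pow_succ (1 + η) r, pow_succ η r]
    field_simp
  have t2 : q ^ r / (η * q) ^ (r + 3 + 1) = (1 + η) ^ 4 / (η ^ r * η ^ 4) := by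
    rw [mul_pow, hqdef, inv_pow, inv_pow, show r + 3 + 1 = r + 4 from rfl,
      pow_add (1 + η) r 4, pow_add η r 4]
    field_simp
  rw [t1, t2, hA, hB, hfac, hq4]
  field_simp
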